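/- Let C be a proper cone with nonempty interior in a Banach space, and h : C → C continuous, homogeneous, and order-preserving. If there exist x ∈ int C, λ > 0 with h^n(x) ≤ λ^n x, and y ∈ C \ {0}, μ > 0 with h^m(y) = μ^m y, then μ ≤ λ. Consequently sup_m (λ_m)^{1/m} ≤ inf_n cw(h^n)^{1/n}, where λ_m is the cone eigenvalue spectral radius of h^m and cw is the Collatz-Wielandt number. -/

import Mathlib

open Set

/-- The Collatz-Wielandt number `cw(f) = inf {λ > 0 : ∃ x ∈ int C, f(x) ≤ λ x}`. -/
noncomputable def collatzWielandt {X : Type*} [NormedAddCommGroup X] [NormedSpace ℝ X]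
    (C : Set X) (f : X → X) : ENNReal :=
  ⨅ (l : ℝ) (_ : 0 < l ∧ ∃ x ∈ interior C, l • x - f x ∈ C), ENNReal.ofReal l

/-- The cone eigenvalue spectral radius `sup {λ ≥ 0 : ∃ x ∈ C \ {0}, g(x) = λ x}`. -/
noncomputable def eigenvalueSpectralRadius {X : Type*} [NormedAddCommGroup X]
    [NormedSpace ℝ X] (C : Set X) (g : X → X) : ENNReal :=
  ⨆ (l : ℝ) (_ : 0 ≤ l ∧ ∃ y ∈ C, y ≠ 0 ∧ g y = l • y), ENNReal.ofReal l

/-- Key step: an eigenvalue of an iterate is dominated by any Collatz–Wielandt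
witness of another iterate. -/
lemma cw_key_step {X : Type*} [NormedAddCommGroup X] [NormedSpace ℝ X]
    (C : Set X)
    (hclosed : IsClosed C) (hconv : Convex ℝ C)
    (hcone : ∀ t : ℝ, 0 ≤ t → ∀ x ∈ C, t • x ∈ C)
    (hpointed : ∀ x ∈ C, -x ∈ C → x = 0)
    (h : X → X) (hmaps : Set.MapsTo h C C)
    (hhom : ∀ t : ℝ, 0 < t → ∀ x ∈ C, h (t • x) = t • h x)
    (hmono : ∀ x ∈ C, ∀ y ∈ C, y - x ∈ C → h y - h x ∈ C)
    (n m : ℕ) (hn : 1 ≤ n) (hm : 1 ≤ m)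
    (x : X) (hx : x ∈ interior C) (l : ℝ) (hl : 0 < l)
    (hle : l ^ n • x - h^[n] x ∈ C)
    (y : X) (hy : y ∈ C) (hy0 : y ≠ 0) (μ : ℝ) (hμ : 0 < μ)
    (heig : h^[m] y = μ ^ m • y) : μ ≤ l := by
  have hxC : x ∈ C := interior_subset hx
  have hzero : (0 : X) ∈ C := by simpa using hcone 0 le_rfl x hxC
  -- addition stability
  have hadd : ∀ a ∈ C, ∀ b ∈ C, a + b ∈ C := by
    intro a ha b hb
    have h1 : (1/2 : ℝ) • a + (1/2 : ℝ) • b ∈ C :=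
      hconv ha hb (by norm_num) (by norm_num) (by norm_num)
    have h2 := hcone 2 (by norm_num) _ h1
    rw [smul_add, smul_smul, smul_smul] at h2
    norm_num at h2
    exact h2
  -- homogeneity of iterates
  have hhomIt : ∀ k : ℕ, ∀ t : ℝ, 0 < t → ∀ z ∈ C, h^[k] (t • z) = t • h^[k] z := by
    intro k
    induction k with
    | zero => intro t _ z _; simp
    | succ k ih =>
      intro t ht z hz
      rw [Function.iterate_succ_apply', Function.iterate_succ_apply', ih t ht z hz,
        hhom t ht _ (hmaps.iterate k hz)]
  -- monotonicity of iterates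
  have hmonoIt : ∀ k : ℕ, ∀ a ∈ C, ∀ b ∈ C, b - a ∈ C → h^[k] b - h^[k] a ∈ C := by
    intro k
    induction k with
    | zero => intro a _ b _ hab; simpa using hab
    | succ k ih =>
      intro a ha b hb hab
      rw [Function.iterate_succ_apply', Function.iterate_succ_apply']
      exact hmono _ (hmaps.iterate k ha) _ (hmaps.iterate k hb) (ih a ha b hb hab)
  -- iterate the CW inequality
  have hiter : ∀ k : ℕ, (l ^ n) ^ k • x - h^[n * k] x ∈ C := by
    intro k
    induction k with
    | zero => simpa using hzero
    | succ k ih =>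
      have hxk : h^[n * k] x ∈ C := hmaps.iterate _ hxC
      have hpow : (0:ℝ) < (l ^ n) ^ k := pow_pos (pow_pos hl n) k
      have h1 : h^[n] ((l ^ n) ^ k • x) - h^[n] (h^[n * k] x) ∈ C :=
        hmonoIt n _ hxk _ (hcone _ hpow.le x hxC) ih
      rw [hhomIt n _ hpow x hxC] at h1
      have h2 : (l ^ n) ^ k • (l ^ n • x - h^[n] x) ∈ C := hcone _ hpow.le _ hle
      have h3 := hadd _ h2 _ h1
      have heq : (l ^ n) ^ k • (l ^ n • x - h^[n] x)
            + ((l ^ n) ^ k • h^[n] x - h^[n] (h^[n * k] x))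
          = (l ^ n) ^ (k+1) • x - h^[n * (k+1)] x := by
        rw [show n * (k+1) = n + n * k by ring, Function.iterate_add_apply]
        rw [smul_sub, smul_smul, ← pow_succ]
        abel
      rwa [heq] at h3
  -- iterate the eigen equation
  have heigIt : ∀ k : ℕ, h^[m * k] y = (μ ^ m) ^ k • y := by
    intro k
    induction k with
    | zero => simp
    | succ k ih =>
      have hpow : (0:ℝ) < (μ ^ m) ^ k := pow_pos (pow_pos hμ m) k
      rw [show m * (k+1) = m + m * k by ring, Function.iterate_add_apply, ih,
        hhomIt m _ hpow y hy, heig, smul_smul, ← pow_succ]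
  -- find b with y ≤ b • x
  obtain ⟨ε, hε, hball⟩ := Metric.isOpen_iff.1 isOpen_interior x hx
  have hyn : 0 < ‖y‖ := norm_pos_iff.2 hy0
  set δ : ℝ := ε / (2 * ‖y‖) with hδdef
  have hδ : 0 < δ := div_pos hε (by positivity)
  have hmem : x - δ • y ∈ C := by
    apply interior_subset
    apply hball
    rw [Metric.mem_ball, dist_eq_norm]
    have : x - δ • y - x = -(δ • y) := by abel
    rw [this, norm_neg, norm_smul, Real.norm_eq_abs, abs_of_pos hδ, hδdef]
    have heq : ε / (2 * ‖y‖) * ‖y‖ = ε / 2 := by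
      field_simp
    rw [heq]
    linarith
  set b : ℝ := δ⁻¹ with hbdef
  have hb : 0 < b := inv_pos.2 hδ
  have hbx : b • x - y ∈ C := by
    have h1 := hcone b hb.le _ hmem
    rwa [smul_sub, smul_smul, hbdef, inv_mul_cancel₀ hδ.ne', one_smul] at h1
  -- main contradiction
  by_contra hcon
  push_neg at hcon
  set r : ℝ := (l / μ) ^ (n * m) with hrdef
  have hlm : l / μ < 1 := (div_lt_one hμ).2 hcon
  have hr0 : 0 ≤ r := pow_nonneg (div_nonneg hl.le hμ.le) _
  have hr1 : r < 1 := pow_lt_one₀ (div_nonneg hl.le hμ.le) hlm (by positivity)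
  have hkey : ∀ k : ℕ, (b * r ^ k) • x - y ∈ C := by
    intro k
    have h1 : (l ^ n) ^ (m * k) • x - h^[n * (m * k)] x ∈ C := hiter (m * k)
    have h2 : h^[m * (n * k)] y = (μ ^ m) ^ (n * k) • y := heigIt (n * k)
    have h3 : h^[n * (m * k)] (b • x) - h^[n * (m * k)] y ∈ C :=
      hmonoIt _ y hy _ (hcone b hb.le x hxC) hbx
    rw [hhomIt _ b hb x hxC] at h3
    have h4 : b • ((l ^ n) ^ (m * k) • x - h^[n * (m * k)] x) ∈ C := hcone b hb.le _ h1
    have h5 := hadd _ h4 _ h3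
    rw [show m * (n * k) = n * (m * k) by ring] at h2
    rw [h2] at h5
    have h6 : (b * l ^ (n * (m * k))) • x - μ ^ (n * (m * k)) • y ∈ C := by
      have heq : b • ((l ^ n) ^ (m * k) • x - h^[n * (m * k)] x)
            + (b • h^[n * (m * k)] x - (μ ^ m) ^ (n * k) • y)
          = (b * l ^ (n * (m * k))) • x - μ ^ (n * (m * k)) • y := by
        rw [smul_sub, smul_smul, ← pow_mul, ← pow_mul,
          show m * (n * k) = n * (m * k) by ring]
        abel
      rwa [heq] at h5
    have hμpow : (0:ℝ) < μ ^ (n * (m * k)) := pow_pos hμ _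
    have h7 := hcone (μ ^ (n * (m * k)))⁻¹ (inv_pos.2 hμpow).le _ h6
    rw [smul_sub, smul_smul, smul_smul, inv_mul_cancel₀ hμpow.ne', one_smul] at h7
    have heq2 : (μ ^ (n * (m * k)))⁻¹ * (b * l ^ (n * (m * k))) = b * r ^ k := by
      rw [hrdef, ← pow_mul, div_pow, div_eq_mul_inv,
        show n * m * k = n * (m * k) by ring]
      ring
    rwa [heq2] at h7
  -- take the limit
  have hc : Filter.Tendsto (fun k : ℕ => b * r ^ k) Filter.atTop (nhds 0) := by
    have := (tendsto_pow_atTop_nhds_zero_of_lt_one hr0 hr1).const_mul b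
    simpa using this
  have hx0 : Filter.Tendsto (fun k : ℕ => (b * r ^ k) • x - y) Filter.atTop (nhds (-y)) := by
    have h1 : Filter.Tendsto (fun k : ℕ => (b * r ^ k) • x) Filter.atTop (nhds 0) := by
      have := hc.smul_const x
      simpa using this
    have := h1.sub_const y
    simpa using this
  have hneg : -y ∈ C :=
    hclosed.mem_of_tendsto hx0 (Filter.Eventually.of_forall hkey)
  exact hy0 (hpointed y hy hneg)

theorem eigenvalue_le_collatzWielandt
    {X : Type*} [NormedAddCommGroup X] [NormedSpace ℝ X] [CompleteSpace X]
    (C : Set X)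
    (hclosed : IsClosed C) (hconv : Convex ℝ C)
    (hcone : ∀ t : ℝ, 0 ≤ t → ∀ x ∈ C, t • x ∈ C)
    (hpointed : ∀ x ∈ C, -x ∈ C → x = 0)
    (hint : (interior C).Nonempty)
    (h : X → X) (hmaps : MapsTo h C C) (hcont : ContinuousOn h C)
    (hhom : ∀ t : ℝ, 0 < t → ∀ x ∈ C, h (t • x) = t • h x)
    (hmono : ∀ x ∈ C, ∀ y ∈ C, y - x ∈ C → h y - h x ∈ C) :
    (∀ n m : ℕ, 1 ≤ n → 1 ≤ m → ∀ x ∈ interior C, ∀ l : ℝ, 0 < l →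
        l ^ n • x - h^[n] x ∈ C →
        ∀ y ∈ C, y ≠ 0 → ∀ μ : ℝ, 0 < μ → h^[m] y = μ ^ m • y → μ ≤ l) ∧
    (⨆ (m : ℕ) (_ : 1 ≤ m), (eigenvalueSpectralRadius C (h^[m])) ^ ((m : ℝ)⁻¹)) ≤
      (⨅ (n : ℕ) (_ : 1 ≤ n), (collatzWielandt C (h^[n])) ^ ((n : ℝ)⁻¹)) := by
  have key : ∀ n m : ℕ, 1 ≤ n → 1 ≤ m → ∀ x ∈ interior C, ∀ l : ℝ, 0 < l →
      l ^ n • x - h^[n] x ∈ C →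
      ∀ y ∈ C, y ≠ 0 → ∀ μ : ℝ, 0 < μ → h^[m] y = μ ^ m • y → μ ≤ l := by
    intro n m hn hm x hx l hl hle y hy hy0 μ hμ heig
    exact cw_key_step C hclosed hconv hcone hpointed h hmaps hhom hmono
      n m hn hm x hx l hl hle y hy hy0 μ hμ heig
  refine ⟨key, ?_⟩
  refine iSup₂_le fun m hm => le_iInf₂ fun n hn => ?_
  have hm0 : (0:ℝ) < (m : ℝ) := by exact_mod_cast hm
  have hn0 : (0:ℝ) < (n : ℝ) := by exact_mod_cast hn
  rw [← ENNReal.rpow_le_rpow_iff hn0, ← ENNReal.rpow_mul, ← ENNReal.rpow_mul,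
    inv_mul_cancel₀ hn0.ne', ENNReal.rpow_one]
  unfold collatzWielandt
  refine le_iInf₂ fun l' hl' => ?_
  have hmn : (0:ℝ) < (m : ℝ) * (n : ℝ)⁻¹ := by positivity
  rw [← ENNReal.rpow_le_rpow_iff hmn, ← ENNReal.rpow_mul,
    show (m:ℝ)⁻¹ * (n:ℝ) * ((m:ℝ) * (n:ℝ)⁻¹) = 1 by field_simp,
    ENNReal.rpow_one]
  unfold eigenvalueSpectralRadius
  refine iSup₂_le fun l hl => ?_
  obtain ⟨hl0, y, hy, hy0, heig⟩ := hl
  obtain ⟨hl'pos, x, hx, hcw⟩ := hl'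
  rcases hl0.eq_or_lt with rfl | hlpos
  · simp
  -- now 0 < l
  set μ : ℝ := l ^ ((m:ℝ)⁻¹) with hμdef
  set lam : ℝ := l' ^ ((n:ℝ)⁻¹) with hlamdef
  have hμpos : 0 < μ := Real.rpow_pos_of_pos hlpos _
  have hlampos : 0 < lam := Real.rpow_pos_of_pos hl'pos _
  have hμm : μ ^ m = l := by
    rw [hμdef, ← Real.rpow_natCast (l ^ ((m:ℝ)⁻¹)) m, ← Real.rpow_mul hlpos.le,
      inv_mul_cancel₀ hm0.ne', Real.rpow_one]
  have hlamn : lam ^ n = l' := by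
    rw [hlamdef, ← Real.rpow_natCast (l' ^ ((n:ℝ)⁻¹)) n, ← Real.rpow_mul hl'pos.le,
      inv_mul_cancel₀ hn0.ne', Real.rpow_one]
  have hμlam : μ ≤ lam := by
    apply key n m hn hm x hx lam hlampos _ y hy hy0 μ hμpos _
    · rw [hlamn]; exact hcw
    · rw [hμm]; exact heig
  -- conclude
  have hreal : l ≤ l' ^ ((m:ℝ) * (n:ℝ)⁻¹) := by
    have h1 : μ ^ m ≤ lam ^ m := pow_le_pow_left₀ hμpos.le hμlam m
    rw [hμm] at h1
    calc l ≤ lam ^ m := h1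
      _ = l' ^ ((m:ℝ) * (n:ℝ)⁻¹) := by
        rw [hlamdef, ← Real.rpow_natCast (l' ^ ((n:ℝ)⁻¹)) m, ← Real.rpow_mul hl'pos.le,
          mul_comm]
  rw [ENNReal.ofReal_rpow_of_pos hl'pos]
  exact ENNReal.ofReal_le_ofReal hreal
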